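/- For every integer p ≥ 0 and n = 4p + 1, there exists a planar decomposition of the Kronecker product K_{n,n,n} × K_2 into 2p + 1 planar subgraphs; in particular θ(K_{4p+1,4p+1,4p+1} × K_2) ≤ 2p + 1. -/

import Mathlib

open SimpleGraph

/-- The Kronecker (tensor/direct/categorical) product of two simple graphs:
`(g, h)` is adjacent to `(g', h')` iff `g g' ∈ E(G)` and `h h' ∈ E(H)`. -/
def SimpleGraph.tensorProd {α β : Type*} (G : SimpleGraph α) (H : SimpleGraph β) :
    SimpleGraph (α × β) where
  Adj x y := G.Adj x.1 y.1 ∧ H.Adj x.2 y.2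
  symm := ⟨fun _ _ h => ⟨h.1.symm, h.2.symm⟩⟩
  loopless := ⟨fun _ h => G.irrefl h.1⟩

/-- A simple graph is planar if it has a plane drawing: an injective placement of the
vertices in `ℝ²` together with, for each edge, a simple arc joining the images of its
endpoints, such that the interior of each arc avoids all vertex images and the interiors
of arcs of distinct edges are pairwise disjoint. -/
def SimpleGraph.IsPlanar {V : Type*} (G : SimpleGraph V) : Prop :=
  ∃ (pos : V → ℝ × ℝ) (arc : G.edgeSet → ℝ → ℝ × ℝ),
    Function.Injective pos ∧
    (∀ e : G.edgeSet, ContinuousOn (arc e) (Set.Icc 0 1) ∧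
      Set.InjOn (arc e) (Set.Icc 0 1) ∧
      ∃ u v : V, (e : Sym2 V) = s(u, v) ∧ arc e 0 = pos u ∧ arc e 1 = pos v) ∧
    (∀ e : G.edgeSet, ∀ x ∈ Set.Ioo (0:ℝ) 1, ∀ w : V, arc e x ≠ pos w) ∧
    (∀ e f : G.edgeSet, e ≠ f →
      ∀ x ∈ Set.Ioo (0:ℝ) 1, ∀ y ∈ Set.Ioo (0:ℝ) 1, arc e x ≠ arc f y)

/-- `G` has a decomposition into `t` planar subgraphs: `t` planar subgraphs of `G`
whose union is `G`. -/
def SimpleGraph.HasPlanarDecomposition {V : Type*} (G : SimpleGraph V) (t : ℕ) : Prop :=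
  ∃ f : Fin t → SimpleGraph V, (∀ i, f i ≤ G) ∧ (∀ i, (f i).IsPlanar) ∧ (⨆ i, f i) = G

/-- The thickness of a graph: the minimum number of planar subgraphs whose union is `G`. -/
noncomputable def SimpleGraph.thickness {V : Type*} (G : SimpleGraph V) : ℕ :=
  sInf {t | G.HasPlanarDecomposition t}

/-- The complete tripartite graph `K_{l,m,n}`. -/
def completeTripartiteGraph (l m n : ℕ) :
    SimpleGraph (Σ i : Fin 3, Fin (![l, m, n] i)) :=
  completeMultipartiteGraph fun i : Fin 3 => Fin (![l, m, n] i)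
open Complex

namespace ThickAux

local notation "π" => Real.pi

lemma polar_eq {r r' θ θ' : ℝ} (hr : 0 < r) (hr' : 0 < r')
    (h : (r : ℂ) * Complex.exp ((θ : ℂ) * Complex.I)
       = (r' : ℂ) * Complex.exp ((θ' : ℂ) * Complex.I)) :
    r = r' ∧ ∃ k : ℤ, θ = θ' + k * (2 * π) := by
  have habs := congrArg (‖·‖) h
  simp only [norm_mul, Complex.norm_exp_ofReal_mul_I, Complex.norm_real, Real.norm_eq_abs, mul_one] at habs
  rw [abs_of_pos hr, abs_of_pos hr'] at habs
  refine ⟨habs, ?_⟩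
  have hrne : (r' : ℂ) ≠ 0 := by exact_mod_cast hr'.ne'
  rw [habs] at h
  have h2 := mul_left_cancel₀ hrne h
  rw [Complex.exp_eq_exp_iff_exists_int] at h2
  obtain ⟨k, hk⟩ := h2
  refine ⟨k, ?_⟩
  have : ((θ : ℂ)) = ((θ' + k * (2 * π) : ℝ) : ℂ) := by
    have := mul_right_cancel₀ Complex.I_ne_zero
      (by push_cast at hk ⊢; linear_combination hk :
        (θ : ℂ) * Complex.I = ((θ' + k * (2 * π) : ℝ) : ℂ) * Complex.I)
    exact this
  exact_mod_cast this

/-- the point at radius `ρ`, angle `a·60°`. -/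
noncomputable def pt (ρ a : ℝ) : ℝ × ℝ :=
  (((ρ : ℂ) * Complex.exp (((a * (π / 3) : ℝ) : ℂ) * Complex.I)).re,
   ((ρ : ℂ) * Complex.exp (((a * (π / 3) : ℝ) : ℂ) * Complex.I)).im)

lemma ptEq {ρ ρ' a a' : ℝ} (hρ : 0 < ρ) (hρ' : 0 < ρ') (h : pt ρ a = pt ρ' a') :
    ρ = ρ' ∧ ∃ k : ℤ, a = a' + 6 * k := by
  rw [pt, pt, Prod.mk.injEq] at h
  have hC : (ρ : ℂ) * Complex.exp (((a * (π / 3) : ℝ) : ℂ) * Complex.I)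
      = (ρ' : ℂ) * Complex.exp (((a' * (π / 3) : ℝ) : ℂ) * Complex.I) :=
    Complex.ext h.1 h.2
  obtain ⟨h1, k, hk⟩ := polar_eq hρ hρ' hC
  refine ⟨h1, k, ?_⟩
  have hπ : (0:ℝ) < π / 3 := by positivity
  have : a * (π / 3) = (a' + 6 * k) * (π / 3) := by rw [hk]; ring
  exact mul_right_cancel₀ hπ.ne' this

lemma ptCongr {ρ ρ' a a' : ℝ} (hrr : ρ = ρ')
    (hab : a = a' ∨ a = a' + 6 ∨ a = a' - 6) : pt ρ a = pt ρ' a' := by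
  subst hrr
  have key : ∀ (c : ℝ) (k : ℤ), Complex.exp ((((c + 6 * k) * (π / 3) : ℝ) : ℂ) * Complex.I)
      = Complex.exp (((c * (π / 3) : ℝ) : ℂ) * Complex.I) := by
    intro c k
    rw [Complex.exp_eq_exp_iff_exists_int]
    refine ⟨k, ?_⟩
    push_cast
    ring
  unfold pt
  rcases hab with rfl | rfl | rfl
  · rfl
  · rw [show a' + 6 = a' + 6 * ((1:ℤ):ℝ) by push_cast; ring, key]
  · rw [show a' - 6 = a' + 6 * ((-1:ℤ):ℝ) by push_cast; ring, key]

lemma ptCont {X : Type*} [TopologicalSpace X] {f g : X → ℝ}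
    (hf : Continuous f) (hg : Continuous g) :
    Continuous fun x => pt (f x) (g x) := by
  have h1 : Continuous fun x => ((f x : ℝ) : ℂ) * Complex.exp
      (((g x * (π / 3) : ℝ) : ℂ) * Complex.I) := by
    apply Continuous.mul
    · exact Complex.continuous_ofReal.comp hf
    · exact Complex.continuous_exp.comp
        ((Complex.continuous_ofReal.comp (hg.mul continuous_const)).mul continuous_const)
  exact (Complex.continuous_re.comp h1).prodMk (Complex.continuous_im.comp h1)

/-- A graph whose vertices carry a "class" in `[0,6)` and a "ring" such that
ring parity matches class parity, (class, ring) determines the vertex, and every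
edge joins consecutive classes (mod 6) on consecutive rings, is planar
(it embeds as a hexagonal cylindrical grid). -/
lemma isPlanar_of_ring {Vt : Type*} (H : SimpleGraph Vt) (cl rg : Vt → ℕ)
    (h6 : ∀ v, cl v < 6)
    (hpar : ∀ v, rg v % 2 = cl v % 2)
    (hinj : ∀ v w, cl v = cl w → rg v = rg w → v = w)
    (hadj : ∀ v w, H.Adj v w → (cl v + 1) % 6 = cl w ∨ (cl w + 1) % 6 = cl v)
    (hrg : ∀ v w, H.Adj v w → rg v = rg w + 1 ∨ rg w = rg v + 1) :
    H.IsPlanar := by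
  classical
  have hends : ∀ e : H.edgeSet, ∃ uv : Vt × Vt,
      H.Adj uv.1 uv.2 ∧ (e : Sym2 Vt) = s(uv.1, uv.2) ∧ rg uv.2 = rg uv.1 + 1 := by
    rintro ⟨e, he⟩
    revert he
    induction e using Sym2.inductionOn with
    | _ a b =>
      intro he
      rw [SimpleGraph.mem_edgeSet] at he
      rcases hrg _ _ he with h | h
      · exact ⟨(b, a), he.symm, Sym2.eq_swap, h⟩
      · exact ⟨(a, b), he, rfl, h⟩
  choose ends hA hS hR using hends
  set eps : H.edgeSet → ℝ :=
    fun e => if (cl (ends e).1 + 1) % 6 = cl (ends e).2 then (1:ℝ) else -1 with heps_def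
  have hdich : ∀ g : H.edgeSet,
      (eps g = 1 ∧ (cl (ends g).1 + 1) % 6 = cl (ends g).2)
      ∨ (eps g = -1 ∧ (cl (ends g).2 + 1) % 6 = cl (ends g).1) := by
    intro g
    by_cases h0 : (cl (ends g).1 + 1) % 6 = cl (ends g).2
    · exact Or.inl ⟨if_pos h0, h0⟩
    · rcases hadj _ _ (hA g) with h | h
      · exact absurd h h0
      · exact Or.inr ⟨if_neg h0, h⟩
  refine ⟨fun v => pt ((rg v : ℝ) + 1) (cl v),
          fun e σ => pt ((rg (ends e).1 : ℝ) + 1 + σ) ((cl (ends e).1 : ℝ) + eps e * σ),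
          ?_, ?_, ?_, ?_⟩
  · -- injectivity of pos
    intro v w h
    have hpos : (0:ℝ) < (rg v : ℝ) + 1 := by positivity
    have hpos' : (0:ℝ) < (rg w : ℝ) + 1 := by positivity
    obtain ⟨h1, k, hk⟩ := ptEq hpos hpos' h
    have hrgvw : rg v = rg w := by
      have : ((rg v : ℕ) : ℝ) = ((rg w : ℕ) : ℝ) := by linarith
      exact_mod_cast this
    have hk' : (cl v : ℤ) = (cl w : ℤ) + 6 * k := by exact_mod_cast hk
    have h6v := h6 v; have h6w := h6 w
    have hclvw : cl v = cl w := by omega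
    exact hinj _ _ hclvw hrgvw
  · -- each arc: continuity, injectivity, endpoints
    intro e
    refine ⟨(ptCont (continuous_const.add continuous_id)
        (continuous_const.add (continuous_const.mul continuous_id))).continuousOn, ?_, ?_⟩
    · intro σ hσ σ' hσ' hp
      have h0 : (0:ℝ) ≤ σ := hσ.1
      have h0' : (0:ℝ) ≤ σ' := hσ'.1
      have hpos : (0:ℝ) < (rg (ends e).1 : ℝ) + 1 + σ := by positivity
      have hpos' : (0:ℝ) < (rg (ends e).1 : ℝ) + 1 + σ' := by positivity
      obtain ⟨h1, -⟩ := ptEq hpos hpos' hp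
      linarith
    · refine ⟨(ends e).1, (ends e).2, hS e, ?_, ?_⟩
      · exact ptCongr (by ring) (Or.inl (by ring))
      · -- arc e 1 = pos of second endpoint
        have hrr : (rg (ends e).1 : ℝ) + 1 + 1 = (rg (ends e).2 : ℝ) + 1 := by
          have := hR e; push_cast [this]; ring
        rcases hdich e with ⟨he1, hc⟩ | ⟨he1, hc⟩
        · have h6u := h6 (ends e).1
          rcases (by omega : (cl (ends e).1 ≤ 4 ∧ cl (ends e).2 = cl (ends e).1 + 1)
              ∨ (cl (ends e).1 = 5 ∧ cl (ends e).2 = 0)) with ⟨-, h2⟩ | ⟨h1, h2⟩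
          · exact ptCongr hrr (Or.inl (by rw [he1, h2]; push_cast; ring))
          · refine ptCongr hrr (Or.inr (Or.inl ?_))
            rw [he1, h1, h2]; norm_num
        · have h6v := h6 (ends e).2
          rcases (by omega : (cl (ends e).2 ≤ 4 ∧ cl (ends e).1 = cl (ends e).2 + 1)
              ∨ (cl (ends e).2 = 5 ∧ cl (ends e).1 = 0)) with ⟨-, h2⟩ | ⟨h1, h2⟩
          · exact ptCongr hrr (Or.inl (by rw [he1, h2]; push_cast; ring))
          · refine ptCongr hrr (Or.inr (Or.inr ?_))
            rw [he1, h1, h2]; norm_num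
  · -- interiors avoid vertices
    intro e σ hσ w hp
    have hpos : (0:ℝ) < (rg (ends e).1 : ℝ) + 1 + σ := by
      have := hσ.1; positivity
    have hpos' : (0:ℝ) < (rg w : ℝ) + 1 := by positivity
    obtain ⟨h1, -⟩ := ptEq hpos hpos' hp
    have l1 : ((rg (ends e).1 : ℕ) : ℝ) < ((rg w : ℕ) : ℝ) := by
      have := hσ.1; linarith
    have l2 : ((rg w : ℕ) : ℝ) < ((rg (ends e).1 : ℕ) : ℝ) + 1 := by
      have := hσ.2; linarith
    have l1' : rg (ends e).1 < rg w := by exact_mod_cast l1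
    have l2' : rg w < rg (ends e).1 + 1 := by exact_mod_cast l2
    omega
  · -- distinct edges don't cross
    intro e f hef σ hσ σ' hσ' hp
    have hpos : (0:ℝ) < (rg (ends e).1 : ℝ) + 1 + σ := by have := hσ.1; positivity
    have hpos' : (0:ℝ) < (rg (ends f).1 : ℝ) + 1 + σ' := by have := hσ'.1; positivity
    obtain ⟨h1, k, hk⟩ := ptEq hpos hpos' hp
    have hρ : rg (ends e).1 = rg (ends f).1 := by
      have l1 : ((rg (ends e).1 : ℕ) : ℝ) < ((rg (ends f).1 : ℕ) : ℝ) + 1 := by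
        have := hσ.1; have := hσ'.2; linarith
      have l2 : ((rg (ends f).1 : ℕ) : ℝ) < ((rg (ends e).1 : ℕ) : ℝ) + 1 := by
        have := hσ'.1; have := hσ.2; linarith
      have l1' : rg (ends e).1 < rg (ends f).1 + 1 := by exact_mod_cast l1
      have l2' : rg (ends f).1 < rg (ends e).1 + 1 := by exact_mod_cast l2
      omega
    have hσσ : σ = σ' := by
      have : ((rg (ends e).1 : ℕ) : ℝ) = ((rg (ends f).1 : ℕ) : ℝ) := by
        exact_mod_cast hρ
      linarith
    subst hσσ
    -- parity facts
    have hp1 := hpar (ends e).1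
    have hp2 := hpar (ends f).1
    have h61 := h6 (ends e).1
    have h62 := h6 (ends f).1
    have h63 := h6 (ends e).2
    have h64 := h6 (ends f).2
    rcases hdich e with ⟨he1, hce⟩ | ⟨he1, hce⟩ <;>
      rcases hdich f with ⟨hf1, hcf⟩ | ⟨hf1, hcf⟩
    · -- eps e = 1, eps f = 1
      rw [he1, hf1] at hk
      have hcc : ((cl (ends e).1 : ℤ)) = (cl (ends f).1 : ℤ) + 6 * k := by
        have : ((cl (ends e).1 : ℝ)) = (cl (ends f).1 : ℝ) + 6 * (k:ℝ) := by linarith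
        exact_mod_cast this
      have hc : cl (ends e).1 = cl (ends f).1 := by omega
      have hu : (ends e).1 = (ends f).1 := hinj _ _ hc hρ
      have hcv : cl (ends e).2 = cl (ends f).2 := by rw [← hce, ← hcf, hc]
      have hrv : rg (ends e).2 = rg (ends f).2 := by rw [hR e, hR f, hρ]
      have hv : (ends e).2 = (ends f).2 := hinj _ _ hcv hrv
      exact hef (Subtype.ext (by rw [hS e, hS f, hu, hv]))
    · -- eps e = 1, eps f = -1
      rw [he1, hf1] at hk
      have hm : (2:ℝ) * σ = (((cl (ends f).1 : ℤ) - (cl (ends e).1 : ℤ) + 6 * k : ℤ) : ℝ) := by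
        push_cast; linarith
      have hm1 : (0:ℤ) < (cl (ends f).1 : ℤ) - (cl (ends e).1 : ℤ) + 6 * k := by
        have : (0:ℝ) < (((cl (ends f).1 : ℤ) - (cl (ends e).1 : ℤ) + 6 * k : ℤ) : ℝ) := by
          rw [← hm]; have := hσ.1; linarith
        exact_mod_cast this
      have hm2 : ((cl (ends f).1 : ℤ) - (cl (ends e).1 : ℤ) + 6 * k : ℤ) < 2 := by
        have : (((cl (ends f).1 : ℤ) - (cl (ends e).1 : ℤ) + 6 * k : ℤ) : ℝ) < 2 := by
          rw [← hm]; have := hσ.2; linarith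
        exact_mod_cast this
      omega
    · -- eps e = -1, eps f = 1
      rw [he1, hf1] at hk
      have hm : (2:ℝ) * σ = (((cl (ends e).1 : ℤ) - (cl (ends f).1 : ℤ) - 6 * k : ℤ) : ℝ) := by
        push_cast; linarith
      have hm1 : (0:ℤ) < (cl (ends e).1 : ℤ) - (cl (ends f).1 : ℤ) - 6 * k := by
        have : (0:ℝ) < (((cl (ends e).1 : ℤ) - (cl (ends f).1 : ℤ) - 6 * k : ℤ) : ℝ) := by
          rw [← hm]; have := hσ.1; linarith
        exact_mod_cast this
      have hm2 : ((cl (ends e).1 : ℤ) - (cl (ends f).1 : ℤ) - 6 * k : ℤ) < 2 := by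
        have : (((cl (ends e).1 : ℤ) - (cl (ends f).1 : ℤ) - 6 * k : ℤ) : ℝ) < 2 := by
          rw [← hm]; have := hσ.2; linarith
        exact_mod_cast this
      omega
    · -- eps e = -1, eps f = -1
      rw [he1, hf1] at hk
      have hcc : ((cl (ends e).1 : ℤ)) = (cl (ends f).1 : ℤ) + 6 * k := by
        have : ((cl (ends e).1 : ℝ)) = (cl (ends f).1 : ℝ) + 6 * (k:ℝ) := by linarith
        exact_mod_cast this
      have hc : cl (ends e).1 = cl (ends f).1 := by omega
      have hu : (ends e).1 = (ends f).1 := hinj _ _ hc hρ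
      have hcv : cl (ends e).2 = cl (ends f).2 := by
        rw [hc] at hce
        omega
      have hrv : rg (ends e).2 = rg (ends f).2 := by rw [hR e, hR f, hρ]
      have hv : (ends e).2 = (ends f).2 := hinj _ _ hcv hrv
      exact hef (Subtype.ext (by rw [hS e, hS f, hu, hv]))

end ThickAux
namespace ThickAux

instance instNZ (p : ℕ) : NeZero (4 * p + 1) := ⟨by omega⟩

abbrev Vp (p : ℕ) := (Σ i : Fin 3, Fin (![4 * p + 1, 4 * p + 1, 4 * p + 1] i)) × Fin 2

def Gp (p : ℕ) : SimpleGraph (Vp p) :=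
  (completeTripartiteGraph (4 * p + 1) (4 * p + 1) (4 * p + 1)).tensorProd
    (⊤ : SimpleGraph (Fin 2))

def idx {p : ℕ} (v : Vp p) : ℕ := v.1.1.val
def sg {p : ℕ} (v : Vp p) : ℕ := v.2.val
def xv {p : ℕ} (v : Vp p) : ℕ := v.1.2.val
def cls {p : ℕ} (v : Vp p) : ℕ := (4 * idx v + 3 * sg v) % 6

lemma idx_lt {p : ℕ} (v : Vp p) : idx v < 3 := v.1.1.isLt
lemma sg_lt {p : ℕ} (v : Vp p) : sg v < 2 := v.2.isLt
lemma xv_lt {p : ℕ} (v : Vp p) : xv v < 4 * p + 1 := by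
  rcases v with ⟨⟨i, x⟩, s⟩
  fin_cases i <;> exact x.isLt

lemma cls_lt6 {p : ℕ} (v : Vp p) : cls v < 6 := Nat.mod_lt _ (by omega)

lemma cls_mod2 {p : ℕ} (v : Vp p) : cls v % 2 = sg v := by
  have h1 := idx_lt v; have h2 := sg_lt v
  unfold cls; omega

lemma cls_mod3 {p : ℕ} (v : Vp p) : cls v % 3 = idx v := by
  have h1 := idx_lt v; have h2 := sg_lt v
  unfold cls; omega

lemma adj_iff {p : ℕ} (v w : Vp p) :
    (Gp p).Adj v w ↔ (v.1.1 ≠ w.1.1 ∧ v.2 ≠ w.2) := Iff.rfl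

lemma adj_iff' {p : ℕ} (v w : Vp p) :
    (Gp p).Adj v w ↔ (idx v ≠ idx w ∧ sg v ≠ sg w) := by
  rw [adj_iff]
  unfold idx sg
  simp [Ne, Fin.ext_iff]

lemma clsAdj_aux : ∀ a b c d : ℕ, a < 3 → b < 3 → c < 2 → d < 2 → a ≠ b → c ≠ d →
    (((4 * a + 3 * c) % 6 + 1) % 6 = (4 * b + 3 * d) % 6 ∨
     ((4 * b + 3 * d) % 6 + 1) % 6 = (4 * a + 3 * c) % 6) := by
  intro a b c d ha hb hc hd hab hcd
  interval_cases a <;> interval_cases b <;> interval_cases c <;> interval_cases d <;>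
    simp_all

lemma adj_cls {p : ℕ} {v w : Vp p} (h : (Gp p).Adj v w) :
    (cls v + 1) % 6 = cls w ∨ (cls w + 1) % 6 = cls v := by
  rw [adj_iff'] at h
  exact clsAdj_aux _ _ _ _ (idx_lt v) (idx_lt w) (sg_lt v) (sg_lt w) h.1 h.2

/-- position of a vertex of class `c`, coordinate `x`, in the ring sequence of piece `t`. -/
def sIdx (p t c x : ℕ) : ℕ :=
  if t < 2 * p then
    (((4 * p - t : ℕ) : ZMod (4 * p + 1))
      + (if c % 2 = 1 then ((2 * t + 1 : ℕ) : ZMod (4 * p + 1)) else 0)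
      - ((x : ℕ) : ZMod (4 * p + 1))).val
  else if x = 0 then 0 else if x ≤ 2 * p then 2 * x - 1 else 2 * (4 * p + 1 - x)

def rg (p t : ℕ) (v : Vp p) : ℕ := 2 * sIdx p t (cls v) (xv v) + cls v % 2

lemma sIdx_inj (p t c : ℕ) {x x' : ℕ} (hx : x < 4 * p + 1) (hx' : x' < 4 * p + 1)
    (h : sIdx p t c x = sIdx p t c x') : x = x' := by
  by_cases h1 : t < 2 * p
  · simp only [sIdx, if_pos h1] at h
    have vinj : Function.Injective (ZMod.val : ZMod (4 * p + 1) → ℕ) :=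
      (ZMod.natCast_rightInverse (n := 4 * p + 1)).injective
    have h3 := vinj h
    have h4 : ((x : ℕ) : ZMod (4 * p + 1)) = ((x' : ℕ) : ZMod (4 * p + 1)) :=
      sub_right_injective h3
    calc x = ((x : ℕ) : ZMod (4 * p + 1)).val := (ZMod.val_cast_of_lt hx).symm
    _ = ((x' : ℕ) : ZMod (4 * p + 1)).val := by rw [h4]
    _ = x' := ZMod.val_cast_of_lt hx'
  · simp only [sIdx, if_neg h1] at h
    split_ifs at h <;> omega

lemma rg_par (p t : ℕ) (v : Vp p) : rg p t v % 2 = cls v % 2 := by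
  unfold rg; omega

lemma piece_inj (p t : ℕ) (v w : Vp p) (hc : cls v = cls w) (hr : rg p t v = rg p t w) :
    v = w := by
  have hidx : idx v = idx w := by rw [← cls_mod3 v, ← cls_mod3 w, hc]
  have hsg : sg v = sg w := by rw [← cls_mod2 v, ← cls_mod2 w, hc]
  have hs : sIdx p t (cls v) (xv v) = sIdx p t (cls v) (xv w) := by
    unfold rg at hr
    rw [← hc] at hr
    omega
  have hxv : xv v = xv w := sIdx_inj p t (cls v) (xv_lt v) (xv_lt w) hs
  rcases v with ⟨⟨i, x⟩, s⟩
  rcases w with ⟨⟨j, y⟩, r⟩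
  have hij : i = j := Fin.ext hidx
  subst hij
  have hxy : x = y := Fin.ext hxv
  have hsr : s = r := Fin.ext hsg
  rw [hxy, hsr]

def piece (p t : ℕ) : SimpleGraph (Vp p) where
  Adj v w := (Gp p).Adj v w ∧ (rg p t v = rg p t w + 1 ∨ rg p t w = rg p t v + 1)
  symm := ⟨fun v w h => ⟨h.1.symm, h.2.symm⟩⟩
  loopless := ⟨fun v h => (Gp p).irrefl h.1⟩

lemma piece_le (p t : ℕ) : piece p t ≤ Gp p := fun _ _ h => h.1

lemma piece_planar (p t : ℕ) : (piece p t).IsPlanar := by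
  apply isPlanar_of_ring (piece p t) cls (rg p t)
  · exact fun v => cls_lt6 v
  · exact fun v => rg_par p t v
  · exact fun v w hc hr => piece_inj p t v w hc hr
  · exact fun v w h => adj_cls h.1
  · exact fun v w h => h.2

end ThickAux
namespace ThickAux

lemma rg_cyc_even (p t : ℕ) (ht : t < 2 * p) (v : Vp p) (hv : cls v % 2 = 0) :
    rg p t v = 2 * (((4 * p - t : ℕ) : ZMod (4 * p + 1))
      - ((xv v : ℕ) : ZMod (4 * p + 1))).val := by
  unfold rg sIdx
  rw [if_pos ht, if_neg (by omega : ¬ (cls v % 2 = 1)), hv, add_zero, add_zero]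

lemma rg_cyc_odd (p t : ℕ) (ht : t < 2 * p) (v : Vp p) (hv : cls v % 2 = 1) :
    rg p t v = 2 * ((((4 * p - t : ℕ) : ZMod (4 * p + 1))
      + ((2 * t + 1 : ℕ) : ZMod (4 * p + 1)))
      - ((xv v : ℕ) : ZMod (4 * p + 1))).val + 1 := by
  unfold rg sIdx
  rw [if_pos ht, if_pos hv, hv]

lemma rg_fin_val (p : ℕ) (v : Vp p) :
    rg p (2 * p) v = 2 * (if xv v = 0 then 0 else if xv v ≤ 2 * p then 2 * xv v - 1
      else 2 * (4 * p + 1 - xv v)) + cls v % 2 := by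
  unfold rg sIdx
  rw [if_neg (lt_irrefl (2 * p))]

lemma cover_aux (p : ℕ) (v w : Vp p) (hv : cls v % 2 = 0) (hw : cls w % 2 = 1) :
    ∃ t : Fin (2 * p + 1), rg p t v = rg p t w + 1 ∨ rg p t w = rg p t v + 1 := by
  have hx : xv v < 4 * p + 1 := xv_lt v
  have hy : xv w < 4 * p + 1 := xv_lt w
  set x := xv v with hxdef
  set y := xv w with hydef
  set D : ZMod (4 * p + 1) := (y : ZMod (4 * p + 1)) - (x : ZMod (4 * p + 1)) with hD
  set d := D.val with hd
  have hdlt : d < 4 * p + 1 := ZMod.val_lt D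
  have hcastd : ((d : ℕ) : ZMod (4 * p + 1)) = D := ZMod.natCast_rightInverse D
  rcases Nat.even_or_odd d with hev | hod
  · -- d even
    rcases Nat.eq_zero_or_pos d with h0 | hpos
    · -- d = 0 : use the final piece
      have hD0 : D = 0 := by
        have : D = ((d : ℕ) : ZMod (4 * p + 1)) := hcastd.symm
        rw [this, h0]; norm_num
      have hxy : y = x := by
        have h1 : (y : ZMod (4 * p + 1)) = (x : ZMod (4 * p + 1)) := by
          have := sub_eq_zero.mp (by rw [← hD]; exact hD0)
          exact this
        have := congrArg ZMod.val h1
        rwa [ZMod.val_cast_of_lt hy, ZMod.val_cast_of_lt hx] at this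
      refine ⟨⟨2 * p, by omega⟩, Or.inr ?_⟩
      rw [rg_fin_val p v, rg_fin_val p w, hv, hw, ← hxdef, ← hydef, hxy]
    · -- d even, d ≥ 2
      obtain ⟨r, hr⟩ := hev
      have htd : 2 * (d / 2 - 1) + 2 = d := by omega
      set t := d / 2 - 1 with htdef
      have ht2 : t < 2 * p := by omega
      set Sv : ZMod (4 * p + 1) := ((4 * p - t : ℕ) : ZMod (4 * p + 1))
        - ((x : ℕ) : ZMod (4 * p + 1)) with hSv
      by_cases hz : Sv.val = 0
      · -- boundary case: use the final piece
        have hSv0 : Sv = 0 := by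
          have : Sv = ((Sv.val : ℕ) : ZMod (4 * p + 1)) :=
            (ZMod.natCast_rightInverse Sv).symm
          rw [this, hz]; norm_num
        have hxφ : ((x : ℕ) : ZMod (4 * p + 1)) = ((4 * p - t : ℕ) : ZMod (4 * p + 1)) :=
          (sub_eq_zero.mp (by rw [← hSv]; exact hSv0)).symm
        have hxval : x = 4 * p - t := by
          have := congrArg ZMod.val hxφ
          rwa [ZMod.val_cast_of_lt hx,
            ZMod.val_cast_of_lt (by omega : 4 * p - t < 4 * p + 1)] at this
        have hyval : y = t + 1 := by
          have h1 : (y : ZMod (4 * p + 1)) = ((t + 1 : ℕ) : ZMod (4 * p + 1)) := by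
            have e1 : (y : ZMod (4 * p + 1)) = ((x : ℕ) : ZMod (4 * p + 1)) + D := by
              rw [hD]; ring
            rw [e1, hxφ, ← hcastd, ← Nat.cast_add,
              show (4 * p - t) + d = (t + 1) + (4 * p + 1) by omega,
              Nat.cast_add, ZMod.natCast_self, add_zero]
          have := congrArg ZMod.val h1
          rwa [ZMod.val_cast_of_lt hy,
            ZMod.val_cast_of_lt (by omega : t + 1 < 4 * p + 1)] at this
        refine ⟨⟨2 * p, by omega⟩, Or.inl ?_⟩
        rw [rg_fin_val p v, rg_fin_val p w, hv, hw, ← hxdef, ← hydef]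
        split_ifs <;> omega
      · -- generic case: use the cyclic piece t
        have h1 : ((4 * p - t : ℕ) : ZMod (4 * p + 1)) + ((2 * t + 1 : ℕ) : ZMod (4 * p + 1))
            - ((y : ℕ) : ZMod (4 * p + 1)) = Sv - 1 := by
          have hc21 : ((2 * t + 1 : ℕ) : ZMod (4 * p + 1)) = D - 1 := by
            rw [show 2 * t + 1 = d - 1 by omega, Nat.cast_sub (by omega : 1 ≤ d),
              Nat.cast_one, hcastd]
          rw [hc21, hSv, hD]; ring
        have hvlt := ZMod.val_lt Sv
        have h2 : (Sv - 1).val = Sv.val - 1 := by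
          have e1 : Sv - 1 = ((Sv.val - 1 : ℕ) : ZMod (4 * p + 1)) := by
            conv_lhs => rw [← ZMod.natCast_rightInverse Sv]
            rw [Nat.cast_sub (by omega : 1 ≤ Sv.val), Nat.cast_one]
          rw [e1, ZMod.val_cast_of_lt (by omega)]
        refine ⟨⟨t, by omega⟩, Or.inl ?_⟩
        rw [rg_cyc_even p t ht2 v hv, rg_cyc_odd p t ht2 w hw, ← hxdef, ← hydef,
          ← hSv, h1, h2]
        omega
  · -- d odd : use the cyclic piece (d-1)/2
    obtain ⟨t, ht⟩ := hod
    have ht2 : t < 2 * p := by omega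
    refine ⟨⟨t, by omega⟩, Or.inr ?_⟩
    rw [rg_cyc_even p t ht2 v hv, rg_cyc_odd p t ht2 w hw]
    have h1 : ((4 * p - t : ℕ) : ZMod (4 * p + 1)) + ((2 * t + 1 : ℕ) : ZMod (4 * p + 1))
        - ((y : ℕ) : ZMod (4 * p + 1))
        = ((4 * p - t : ℕ) : ZMod (4 * p + 1)) - ((x : ℕ) : ZMod (4 * p + 1)) := by
      rw [show 2 * t + 1 = d from ht.symm, hcastd, hD]; ring
    rw [h1]

lemma cover (p : ℕ) {v w : Vp p} (h : (Gp p).Adj v w) :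
    ∃ t : Fin (2 * p + 1), (piece p t.val).Adj v w := by
  have hsg : sg v ≠ sg w := ((adj_iff' v w).mp h).2
  have s1 := sg_lt v; have s2 := sg_lt w
  have c1 := cls_mod2 v; have c2 := cls_mod2 w
  by_cases h0 : sg v = 0
  · obtain ⟨t, ht⟩ := cover_aux p v w (by omega) (by omega)
    exact ⟨t, h, ht⟩
  · obtain ⟨t, ht⟩ := cover_aux p w v (by omega) (by omega)
    exact ⟨t, h, ht.symm⟩

lemma decomp (p : ℕ) : (Gp p).HasPlanarDecomposition (2 * p + 1) := by
  refine ⟨fun t => piece p t.val, fun t => piece_le p t.val,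
    fun t => piece_planar p t.val, ?_⟩
  apply le_antisymm
  · exact iSup_le fun t => piece_le p t.val
  · intro v w h
    rw [SimpleGraph.iSup_adj]
    exact cover p h

end ThickAux
/-- For `p ≥ 0` and `n = 4p + 1`, `K_{n,n,n} × K₂` has a planar decomposition
into `2p + 1` planar subgraphs; in particular `θ(K_{4p+1,4p+1,4p+1} × K₂) ≤ 2p + 1`. -/
theorem completeTripartite_tensorProd_K2_decomposition_of_4p1 (p : ℕ) :
    ((completeTripartiteGraph (4 * p + 1) (4 * p + 1) (4 * p + 1)).tensorProd
        (⊤ : SimpleGraph (Fin 2))).HasPlanarDecomposition (2 * p + 1) ∧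
    ((completeTripartiteGraph (4 * p + 1) (4 * p + 1) (4 * p + 1)).tensorProd
        (⊤ : SimpleGraph (Fin 2))).thickness ≤ 2 * p + 1 := by
  constructor
  · exact ThickAux.decomp p
  · exact Nat.sInf_le (ThickAux.decomp p)
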